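/- Let τ ∈ (0,1), σ > 0, and ε ∈ ℝ, and set ξ = 1 − 2τ and ζ = τ(1−τ)/σ. Then exp( −(|ε| + (2τ−1)ε)/(2σ) ) = ∫₀^∞ (4πσv)^{−1/2} exp( −(ε − ξv)²/(4σv) − ζ v ) dv; i.e., the asymmetric Laplace kernel admits the normal–exponential (location–scale mixture of normals) representation. -/

import Mathlib

open MeasureTheory ProbabilityTheory Real Filter
open scoped ENNReal Topology NNReal

noncomputable section

/-- Check (quantile-loss) function `ρ_τ(u) = u (τ − 1_{u<0})`. -/
def checkFun (τ u : ℝ) : ℝ := u * (τ - if u < 0 then 1 else 0)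

/-- Asymmetric Laplace density with location `μ`, scale `1`, skewness `τ`. -/
def ald (τ y μ : ℝ) : ℝ := τ * (1 - τ) * Real.exp (-(checkFun τ (y - μ)))

lemma glasser_aux (a b : ℝ) (ha : 0 < a) (hb : 0 < b) :
    ∫ s in Set.Ioi (0:ℝ),
        Real.exp (-(Real.sqrt a * s - Real.sqrt b / s) ^ 2)
      = Real.sqrt Real.pi / (2 * Real.sqrt a) := by
  have hsa : 0 < Real.sqrt a := Real.sqrt_pos.2 ha
  have hsb : 0 < Real.sqrt b := Real.sqrt_pos.2 hb
  set f : ℝ → ℝ := fun s => Real.sqrt a * s - Real.sqrt b / s with hf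
  set c : ℝ := Real.sqrt b / Real.sqrt a with hcdef
  have hc : 0 < c := div_pos hsb hsa
  -- derivative of f
  have hf'pos : ∀ s : ℝ, 0 < s → 0 < Real.sqrt a + Real.sqrt b / s ^ 2 := by
    intro s hs
    positivity
  have hfderiv : ∀ s ∈ Set.Ioi (0:ℝ),
      HasDerivWithinAt f (Real.sqrt a + Real.sqrt b / s ^ 2) (Set.Ioi 0) s := by
    intro s hs
    have hs0 : s ≠ 0 := (ne_of_gt hs)
    have h1 : HasDerivAt (fun y : ℝ => Real.sqrt a * y) (Real.sqrt a) s := by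
      simpa using (hasDerivAt_id s).const_mul (Real.sqrt a)
    have h2 : HasDerivAt (fun y : ℝ => Real.sqrt b * y⁻¹)
        (Real.sqrt b * (-(s ^ 2)⁻¹)) s := (hasDerivAt_inv hs0).const_mul (Real.sqrt b)
    have := h1.sub h2
    have heq : (fun y : ℝ => Real.sqrt a * y - Real.sqrt b * y⁻¹) = f := by
      funext y; simp [hf, div_eq_mul_inv]
    rw [show ((fun y : ℝ => Real.sqrt a * y) - fun y => Real.sqrt b * y⁻¹) = f from heq] at this
    have : HasDerivAt f (Real.sqrt a + Real.sqrt b / s ^ 2) s := by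
      exact this.congr_deriv (by ring)
    exact this.hasDerivWithinAt
  -- f is injective on Ioi 0
  have hfmono : StrictMonoOn f (Set.Ioi (0:ℝ)) := by
    intro x hx y hy hxy
    simp only [Set.mem_Ioi] at hx hy
    have h1 : Real.sqrt a * x < Real.sqrt a * y := by
      exact (mul_lt_mul_iff_right₀ hsa).2 hxy
    have h2 : Real.sqrt b / y < Real.sqrt b / x := by
      exact div_lt_div_of_pos_left hsb hx hxy
    simp only [hf]
    linarith
  have hfinj : Set.InjOn f (Set.Ioi 0) := hfmono.injOn
  -- f maps Ioi 0 onto ℝ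
  have hfimg : f '' Set.Ioi 0 = Set.univ := by
    apply Set.eq_univ_of_forall
    intro y
    set D : ℝ := Real.sqrt (y ^ 2 + 4 * (Real.sqrt a * Real.sqrt b)) with hD
    have hD2 : D ^ 2 = y ^ 2 + 4 * (Real.sqrt a * Real.sqrt b) := by
      rw [hD, Real.sq_sqrt]; positivity
    have hDy : |y| < D := by
      have h0 : 0 < Real.sqrt a * Real.sqrt b := mul_pos hsa hsb
      have : (|y|) ^ 2 < D ^ 2 := by rw [hD2, sq_abs]; linarith
      have hDnn : 0 ≤ D := Real.sqrt_nonneg _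
      nlinarith [abs_nonneg y]
    set s : ℝ := (y + D) / (2 * Real.sqrt a) with hs
    have hspos : 0 < s := by
      apply div_pos _ (by positivity)
      have := neg_abs_le y
      linarith
    refine ⟨s, hspos, ?_⟩
    simp only [hf]
    have hs0 : s ≠ 0 := ne_of_gt hspos
    field_simp
    rw [hs]
    field_simp
    nlinarith [hD2, hsa, mul_pos hsa hsb]

  -- substitution u = f s : ∫_ℝ e^{-u²} = ∫_{Ioi 0} |f'| e^{-f²}
  have hsub : (∫ u : ℝ, Real.exp (-u ^ 2))
      = ∫ s in Set.Ioi (0:ℝ), |Real.sqrt a + Real.sqrt b / s ^ 2| * Real.exp (-(f s) ^ 2) := by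
    have := integral_image_eq_integral_abs_deriv_smul measurableSet_Ioi hfderiv hfinj
      (fun u => Real.exp (-u ^ 2))
    rw [hfimg] at this
    simpa [smul_eq_mul] using this
  have hgauss : (∫ u : ℝ, Real.exp (-u ^ 2)) = Real.sqrt Real.pi := by
    simpa using integral_gaussian 1
  -- integrability of |f'| e^{-f²}
  have hint1 : IntegrableOn (fun s => |Real.sqrt a + Real.sqrt b / s ^ 2|
      * Real.exp (-(f s) ^ 2)) (Set.Ioi 0) := by
    have := (integrableOn_image_iff_integrableOn_abs_deriv_smul measurableSet_Ioi hfderiv hfinj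
      (fun u => Real.exp (-u ^ 2))).1 ?_
    · simpa [smul_eq_mul] using this
    · rw [hfimg]
      have : Integrable (fun u : ℝ => Real.exp (-u ^ 2)) := by
        simpa using integrable_exp_neg_mul_sq (show (0:ℝ) < 1 by norm_num)
      exact this.integrableOn
  -- continuity of the integrand on Ioi 0
  have hcontf : ContinuousOn f (Set.Ioi 0) := by
    apply ContinuousOn.sub (continuousOn_const.mul continuousOn_id)
    exact continuousOn_const.div continuousOn_id (fun x hx => ne_of_gt hx)
  have hconte : ContinuousOn (fun s => Real.exp (-(f s) ^ 2)) (Set.Ioi 0) :=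
    (((hcontf.pow 2).neg).rexp)
  -- integrability of √a * e^{-f²}
  have hint2 : IntegrableOn (fun s => Real.sqrt a * Real.exp (-(f s) ^ 2)) (Set.Ioi 0) := by
    apply hint1.mono' ((continuousOn_const.mul hconte).aestronglyMeasurable measurableSet_Ioi)
    filter_upwards [ae_restrict_mem measurableSet_Ioi] with s hs
    have h1 : 0 < Real.sqrt a + Real.sqrt b / s ^ 2 := hf'pos s hs
    have h2 : (0:ℝ) < Real.exp (-(f s) ^ 2) := Real.exp_pos _
    simp only [Set.mem_Ioi] at hs
    have h3 : Real.sqrt b / s ^ 2 > 0 := by positivity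
    simp only [Real.norm_eq_abs, abs_abs, abs_of_pos h1, abs_of_pos h2]
    simp only [Pi.mul_apply]
    rw [abs_mul, abs_of_pos hsa, abs_of_pos h2]
    nlinarith
  -- integrability of (√b/s²) * e^{-f²}
  have hint3 : IntegrableOn (fun s => Real.sqrt b / s ^ 2 * Real.exp (-(f s) ^ 2))
      (Set.Ioi 0) := by
    have hm3 : ContinuousOn (fun s : ℝ => Real.sqrt b / s ^ 2 * Real.exp (-(f s) ^ 2))
        (Set.Ioi 0) := by
      apply ContinuousOn.mul _ hconte
      intro x hx
      simp only [Set.mem_Ioi] at hx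
      exact ContinuousWithinAt.div continuousWithinAt_const
        ((continuousWithinAt_id).pow 2) (by positivity)
    apply hint1.mono' (hm3.aestronglyMeasurable measurableSet_Ioi)
    filter_upwards [ae_restrict_mem measurableSet_Ioi] with s hs
    have h1 : 0 < Real.sqrt a + Real.sqrt b / s ^ 2 := hf'pos s hs
    have h2 : (0:ℝ) < Real.exp (-(f s) ^ 2) := Real.exp_pos _
    have h3 : (0:ℝ) < Real.sqrt b / s ^ 2 := by
      have : (0:ℝ) < s := hs
      positivity
    simp only [Real.norm_eq_abs, abs_abs, abs_of_pos h1, abs_of_pos h2]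
    rw [abs_mul, abs_of_pos h3, abs_of_pos h2]
    nlinarith
  -- split the integral
  have hsplit : (∫ s in Set.Ioi (0:ℝ),
        |Real.sqrt a + Real.sqrt b / s ^ 2| * Real.exp (-(f s) ^ 2))
      = (∫ s in Set.Ioi (0:ℝ), Real.sqrt a * Real.exp (-(f s) ^ 2))
        + ∫ s in Set.Ioi (0:ℝ), Real.sqrt b / s ^ 2 * Real.exp (-(f s) ^ 2) := by
    rw [← integral_add hint2 hint3]
    apply setIntegral_congr_fun measurableSet_Ioi
    intro s hs
    simp only
    rw [abs_of_pos (hf'pos s hs)]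
    ring
  -- inversion substitution: φ s = c * s⁻¹
  have hφderiv : ∀ s ∈ Set.Ioi (0:ℝ),
      HasDerivWithinAt (fun y : ℝ => c * y⁻¹) (-(c / s ^ 2)) (Set.Ioi 0) s := by
    intro s hs
    have : HasDerivAt (fun y : ℝ => c * y⁻¹) (c * (-(s ^ 2)⁻¹)) s :=
      (hasDerivAt_inv (ne_of_gt hs)).const_mul c
    have heq : c * (-(s ^ 2)⁻¹) = -(c / s ^ 2) := by field_simp
    rw [heq] at this
    exact this.hasDerivWithinAt
  have hφinj : Set.InjOn (fun y : ℝ => c * y⁻¹) (Set.Ioi 0) := by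
    intro x hx y hy h
    simp only at h
    have := mul_left_cancel₀ (ne_of_gt hc) h
    exact inv_injective this
  have hφimg : (fun y : ℝ => c * y⁻¹) '' Set.Ioi 0 = Set.Ioi 0 := by
    ext x
    constructor
    · rintro ⟨s, hs, rfl⟩
      simp only [Set.mem_Ioi] at hs ⊢
      positivity
    · intro hx
      simp only [Set.mem_Ioi] at hx
      exact ⟨c / x, by simp only [Set.mem_Ioi]; positivity, by field_simp⟩
  have hstep1 : (∫ x in Set.Ioi (0:ℝ), Real.exp (-(f x) ^ 2))
      = ∫ s in Set.Ioi (0:ℝ), c / s ^ 2 * Real.exp (-(f s) ^ 2) := by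
    have := integral_image_eq_integral_abs_deriv_smul measurableSet_Ioi hφderiv hφinj
      (fun x => Real.exp (-(f x) ^ 2))
    rw [hφimg] at this
    rw [this]
    apply setIntegral_congr_fun measurableSet_Ioi
    intro s hs
    simp only [Set.mem_Ioi] at hs
    have habs : |(-(c / s ^ 2))| = c / s ^ 2 := by
      rw [abs_neg, abs_of_pos (by positivity)]
    have hfc : f (c * s⁻¹) = -(f s) := by
      simp only [hf, hcdef]
      field_simp
      ring
    simp only [smul_eq_mul]
    rw [habs, hfc, neg_sq]
  -- put it together
  have htwo : Real.sqrt Real.pi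
      = 2 * Real.sqrt a * ∫ x in Set.Ioi (0:ℝ), Real.exp (-(f x) ^ 2) := by
    rw [← hgauss, hsub, hsplit]
    have e1 : (∫ s in Set.Ioi (0:ℝ), Real.sqrt a * Real.exp (-(f s) ^ 2))
        = Real.sqrt a * ∫ x in Set.Ioi (0:ℝ), Real.exp (-(f x) ^ 2) :=
      integral_const_mul _ _
    have e2 : (∫ s in Set.Ioi (0:ℝ), Real.sqrt b / s ^ 2 * Real.exp (-(f s) ^ 2))
        = Real.sqrt a * ∫ x in Set.Ioi (0:ℝ), Real.exp (-(f x) ^ 2) := by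
      rw [hstep1, ← integral_const_mul]
      apply setIntegral_congr_fun measurableSet_Ioi
      intro s hs
      simp only [Set.mem_Ioi] at hs
      rw [hcdef]
      field_simp
    rw [e1, e2]
    ring
  have h2a : (2 * Real.sqrt a) ≠ 0 := by positivity
  rw [htwo, mul_div_cancel_left₀ _ h2a]

lemma sq_image_Ioi : (fun s : ℝ => s ^ 2) '' Set.Ioi 0 = Set.Ioi 0 := by
  ext x
  constructor
  · rintro ⟨s, hs, rfl⟩
    simp only [Set.mem_Ioi] at hs ⊢
    positivity
  · intro hx
    simp only [Set.mem_Ioi] at hx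
    exact ⟨Real.sqrt x, by simp only [Set.mem_Ioi]; positivity,
      Real.sq_sqrt hx.le⟩

lemma sq_subst (g : ℝ → ℝ) :
    (∫ v in Set.Ioi (0:ℝ), g v) = ∫ s in Set.Ioi (0:ℝ), 2 * s * g (s ^ 2) := by
  have hderiv : ∀ s ∈ Set.Ioi (0:ℝ),
      HasDerivWithinAt (fun s : ℝ => s ^ 2) (2 * s) (Set.Ioi 0) s := by
    intro s hs
    simpa [mul_comm] using (hasDerivAt_pow 2 s).hasDerivWithinAt
  have hinj : Set.InjOn (fun s : ℝ => s ^ 2) (Set.Ioi 0) := by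
    intro x hx y hy h
    simp only [Set.mem_Ioi] at hx hy
    simp only at h
    nlinarith [h]
  have := integral_image_eq_integral_abs_deriv_smul measurableSet_Ioi hderiv hinj g
  rw [sq_image_Ioi] at this
  rw [this]
  apply setIntegral_congr_fun measurableSet_Ioi
  intro s hs
  simp only [Set.mem_Ioi] at hs
  simp only [smul_eq_mul]
  rw [abs_of_pos (by positivity : (0:ℝ) < 2 * s)]

lemma laplace_transform_inv_sqrt (p q : ℝ) (hp : 0 < p) (hq : 0 < q) :
    ∫ v in Set.Ioi (0:ℝ), (Real.sqrt v)⁻¹ * Real.exp (-(p * v) - q / v)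
      = Real.sqrt (Real.pi / p) * Real.exp (-(2 * Real.sqrt (p * q))) := by
  have hsp : 0 < Real.sqrt p := Real.sqrt_pos.2 hp
  have hsq : 0 < Real.sqrt q := Real.sqrt_pos.2 hq
  rw [sq_subst (fun v => (Real.sqrt v)⁻¹ * Real.exp (-(p * v) - q / v))]
  have hcongr : ∀ s ∈ Set.Ioi (0:ℝ),
      2 * s * ((Real.sqrt (s ^ 2))⁻¹ * Real.exp (-(p * s ^ 2) - q / s ^ 2))
      = 2 * Real.exp (-(2 * Real.sqrt (p * q)))
          * Real.exp (-(Real.sqrt p * s - Real.sqrt q / s) ^ 2) := by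
    intro s hs
    simp only [Set.mem_Ioi] at hs
    rw [Real.sqrt_sq hs.le]
    have hexp : -(p * s ^ 2) - q / s ^ 2
        = -(2 * Real.sqrt (p * q)) + (-(Real.sqrt p * s - Real.sqrt q / s) ^ 2) := by
      have h1 : Real.sqrt p ^ 2 = p := Real.sq_sqrt hp.le
      have h2 : Real.sqrt q ^ 2 = q := Real.sq_sqrt hq.le
      have h3 : Real.sqrt (p * q) = Real.sqrt p * Real.sqrt q := Real.sqrt_mul hp.le q
      rw [h3]
      field_simp
      linear_combination s ^ 2 * s ^ 2 * h1 + h2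
    rw [hexp, Real.exp_add]
    field_simp
  rw [setIntegral_congr_fun measurableSet_Ioi hcongr]
  rw [integral_const_mul, glasser_aux p q hp hq,
    Real.sqrt_div Real.pi_pos.le p]
  have hsp' : Real.sqrt p ≠ 0 := ne_of_gt hsp
  field_simp

lemma half_gamma (p : ℝ) (hp : 0 < p) :
    ∫ v in Set.Ioi (0:ℝ), (Real.sqrt v)⁻¹ * Real.exp (-(p * v)) = Real.sqrt (Real.pi / p) := by
  rw [sq_subst (fun v => (Real.sqrt v)⁻¹ * Real.exp (-(p * v)))]
  have hcongr : ∀ s ∈ Set.Ioi (0:ℝ),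
      2 * s * ((Real.sqrt (s ^ 2))⁻¹ * Real.exp (-(p * s ^ 2)))
      = 2 * Real.exp (-p * s ^ 2) := by
    intro s hs
    simp only [Set.mem_Ioi] at hs
    rw [Real.sqrt_sq hs.le, neg_mul]
    field_simp
  rw [setIntegral_congr_fun measurableSet_Ioi hcongr, integral_const_mul,
    integral_gaussian_Ioi p]
  ring

/-- Normal–exponential (location–scale mixture of normals) representation of the
asymmetric Laplace kernel: with `ξ = 1 − 2τ` and `ζ = τ(1−τ)/σ`,
`exp(−(|ε| + (2τ−1)ε)/(2σ)) = ∫₀^∞ (4πσv)^{−1/2} exp(−(ε − ξv)²/(4σv) − ζv) dv`. -/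
theorem ald_normal_exponential_mixture (τ σ ε : ℝ) (hτ : τ ∈ Set.Ioo (0 : ℝ) 1)
    (hσ : 0 < σ) :
    Real.exp (-((|ε| + (2 * τ - 1) * ε) / (2 * σ)))
      = ∫ v in Set.Ioi (0 : ℝ), (Real.sqrt (4 * Real.pi * σ * v))⁻¹ *
          Real.exp (-((ε - (1 - 2 * τ) * v) ^ 2 / (4 * σ * v)) - (τ * (1 - τ) / σ) * v) := by
  obtain ⟨hτ0, hτ1⟩ := hτ
  have hπ := Real.pi_pos
  have h4σ : (0:ℝ) < 4 * Real.pi * σ := by positivity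
  have hsq : (0:ℝ) < Real.sqrt (4 * Real.pi * σ) := Real.sqrt_pos.2 h4σ
  have hσ' : σ ≠ 0 := ne_of_gt hσ
  have hcongr : ∀ v ∈ Set.Ioi (0:ℝ),
      (Real.sqrt (4 * Real.pi * σ * v))⁻¹ *
          Real.exp (-((ε - (1 - 2 * τ) * v) ^ 2 / (4 * σ * v)) - (τ * (1 - τ) / σ) * v)
      = (Real.sqrt (4 * Real.pi * σ))⁻¹ * Real.exp ((1 - 2 * τ) * ε / (2 * σ)) *
          ((Real.sqrt v)⁻¹ *
            Real.exp (-(1 / (4 * σ) * v) - (ε ^ 2 / (4 * σ)) / v)) := by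
    intro v hv
    simp only [Set.mem_Ioi] at hv
    have hv' : v ≠ 0 := ne_of_gt hv
    rw [Real.sqrt_mul h4σ.le v, mul_inv]
    have hexp : -((ε - (1 - 2 * τ) * v) ^ 2 / (4 * σ * v)) - (τ * (1 - τ) / σ) * v
        = (1 - 2 * τ) * ε / (2 * σ) + (-(1 / (4 * σ) * v) - (ε ^ 2 / (4 * σ)) / v) := by
      field_simp
      ring
    rw [hexp, Real.exp_add]
    ring
  rw [setIntegral_congr_fun measurableSet_Ioi hcongr, integral_const_mul]
  rcases eq_or_ne ε 0 with rfl | hε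
  · simp only [ne_eq, OfNat.ofNat_ne_zero, not_false_eq_true, zero_pow, zero_div, sub_zero,
      abs_zero, mul_zero, zero_add, zero_div, neg_zero, Real.exp_zero, mul_one, zero_mul,
      add_zero]
    rw [half_gamma (1 / (4 * σ)) (by positivity)]
    have : Real.pi / (1 / (4 * σ)) = 4 * Real.pi * σ := by
      field_simp
    rw [this]
    field_simp
  · have hq : (0:ℝ) < ε ^ 2 / (4 * σ) := by positivity
    rw [laplace_transform_inv_sqrt (1 / (4 * σ)) (ε ^ 2 / (4 * σ)) (by positivity) hq]
    have h1 : Real.pi / (1 / (4 * σ)) = 4 * Real.pi * σ := by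
      field_simp
    have h2 : (1 / (4 * σ)) * (ε ^ 2 / (4 * σ)) = (ε / (4 * σ)) ^ 2 := by
      field_simp
    rw [h1, h2, Real.sqrt_sq_eq_abs, abs_div, abs_of_pos (by positivity : (0:ℝ) < 4 * σ)]
    rw [show (Real.sqrt (4 * Real.pi * σ))⁻¹ * Real.exp ((1 - 2 * τ) * ε / (2 * σ)) *
        (Real.sqrt (4 * Real.pi * σ) * Real.exp (-(2 * (|ε| / (4 * σ)))))
      = ((Real.sqrt (4 * Real.pi * σ))⁻¹ * Real.sqrt (4 * Real.pi * σ)) *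
        (Real.exp ((1 - 2 * τ) * ε / (2 * σ)) * Real.exp (-(2 * (|ε| / (4 * σ))))) from by ring]
    rw [inv_mul_cancel₀ (ne_of_gt hsq), one_mul, ← Real.exp_add]
    congr 1
    field_simp
    ring


end
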